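/- arXiv:2208.13973 — 6 statements merged into one kernel-verified Lean document; each statement's English description precedes it below -/
import Mathlib

section
/- If G is a finite minimal nonabelian group (nonabelian but every proper subgroup is abelian) and H is a finite nonabelian group in the quasivariety generated by G (equivalently, H embeds in a finite direct power of G), then |G| ≤ |H|. -/
/-- If `G` is a finite minimal nonabelian group (nonabelian but every proper subgroup
is abelian) and `H` is a finite nonabelian group embedding into a finite direct power
`G^n`, then `|G| ≤ |H|`. -/
theorem stmt_0 (G H : Type) [Group G] [Group H] [Finite G] [Finite H]
    (hGna : ¬ ∀ x y : G, x * y = y * x)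
    (hGmin : ∀ K : Subgroup G, K ≠ ⊤ → ∀ x ∈ K, ∀ y ∈ K, x * y = y * x)
    (hHna : ¬ ∀ x y : H, x * y = y * x)
    (n : ℕ) (f : H →* (Fin n → G)) (hf : Function.Injective f) :
    Nat.card G ≤ Nat.card H := by
  push_neg at hHna
  obtain ⟨a, b, hab⟩ := hHna
  have hfab : f (a * b) ≠ f (b * a) := fun h => hab (hf h)
  rw [map_mul, map_mul] at hfab
  have : ∃ i, f a i * f b i ≠ f b i * f a i := by
    by_contra h
    push_neg at h
    exact hfab (funext h)
  obtain ⟨i, hi⟩ := this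
  set g : H →* G := (Pi.evalMonoidHom (fun _ => G) i).comp f with hg
  have hga : g a = f a i := rfl
  have hgb : g b = f b i := rfl
  have hrange : g.range = ⊤ := by
    by_contra hne
    exact hi (hGmin g.range hne (f a i) ⟨a, rfl⟩ (f b i) ⟨b, rfl⟩)
  have hsurj : Function.Surjective g := MonoidHom.range_eq_top.mp hrange
  exact Nat.card_le_card_of_surjective g hsurj
end

section
/- In the quaternion group Q8 = ⟨a, b | a^4 = 1, a^2 = b^2, aba = b⟩, the subgroup of Q8 × Q8 generated by (a,1) and (ab,b) is isomorphic to the modular group M_2(2,2) = ⟨x, y | x^4 = y^4 = 1, xy = yx^3⟩, a nonabelian group of order 16. -/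
/-- Relations of the quaternion group `Q8 = ⟨a, b | a^4 = 1, a^2 = b^2, aba = b⟩`,
with generators `a = 0`, `b = 1`. -/
def Q8Rels : Set (FreeGroup (Fin 2)) :=
  { (FreeGroup.of 0) ^ 4,
    (FreeGroup.of 0) ^ 2 * ((FreeGroup.of 1) ^ 2)⁻¹,
    (FreeGroup.of 0 * FreeGroup.of 1 * FreeGroup.of 0) * (FreeGroup.of 1)⁻¹ }

/-- Relations of `M_2(2,2) = ⟨x, y | x^4 = y^4 = 1, xy = yx^3⟩`,
with generators `x = 0`, `y = 1`. -/
def M22Rels : Set (FreeGroup (Fin 2)) :=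
  { (FreeGroup.of 0) ^ 4,
    (FreeGroup.of 1) ^ 4,
    (FreeGroup.of 0 * FreeGroup.of 1) * (FreeGroup.of 1 * (FreeGroup.of 0) ^ 3)⁻¹ }

namespace Stmt5Aux
open QuaternionGroup

lemma rel_eq_one {α : Type*} {rels : Set (FreeGroup α)} {r : FreeGroup α} (h : r ∈ rels) :
    PresentedGroup.mk rels r = 1 :=
  (QuotientGroup.eq_one_iff r).mpr (Subgroup.subset_normalClosure h)

abbrev P := PresentedGroup Q8Rels
def A : P := PresentedGroup.of 0
def B : P := PresentedGroup.of 1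

lemma hA4 : A^4 = 1 := by
  have := rel_eq_one (rels := Q8Rels) (Or.inl rfl)
  simpa [A, PresentedGroup.of] using this

lemma hB2 : B*B = A*A := by
  have := rel_eq_one (rels := Q8Rels) (Or.inr (Or.inl rfl))
  have h : A^2 * (B^2)⁻¹ = 1 := by simpa [A, B, PresentedGroup.of] using this
  have := mul_inv_eq_one.mp h
  rw [pow_two, pow_two] at this
  exact this.symm

lemma hABA : A*(B*A) = B := by
  have := rel_eq_one (rels := Q8Rels) (Or.inr (Or.inr rfl))
  have h : A*B*A*B⁻¹ = 1 := by simpa [A, B, PresentedGroup.of] using this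
  have := mul_inv_eq_one.mp h
  rw [mul_assoc] at this
  exact this

end Stmt5Aux

namespace Stmt5Aux

lemma r1' : A*(A*(A*A)) = 1 := by
  have := hA4; rw [pow_succ, pow_succ, pow_succ, pow_one] at this
  simpa [mul_assoc] using this

lemma r1 (t : P) : A*(A*(A*(A*t))) = t := by
  rw [← mul_assoc, ← mul_assoc, ← mul_assoc, show A*A*A*A = A*(A*(A*A)) by simp [mul_assoc], r1', one_mul]

lemma r2 (t : P) : B*(B*t) = A*(A*t) := by
  rw [← mul_assoc, hB2, mul_assoc]

lemma invA : A⁻¹ = A*(A*A) := inv_eq_of_mul_eq_one_right r1'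

lemma r3' : B*A = A*(A*(A*B)) := by
  have h : B*A = A⁻¹ * B := by
    calc B*A = A⁻¹*(A*(B*A)) := (inv_mul_cancel_left _ _).symm
    _ = A⁻¹*B := by rw [hABA]
  rw [h, invA, mul_assoc, mul_assoc]

lemma r3 (t : P) : B*(A*t) = A*(A*(A*(B*t))) := by
  rw [← mul_assoc, r3', mul_assoc, mul_assoc, mul_assoc]

lemma invB : B⁻¹ = A*(A*B) := by
  refine inv_eq_of_mul_eq_one_right ?_
  simp [mul_assoc, r3, r3', r1, r1', r2, hB2]

def pQ (g : P) : Prop :=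
  g = 1 ∨ g = A ∨ g = A*A ∨ g = A*(A*A) ∨ g = B ∨ g = A*B ∨ g = A*(A*B) ∨ g = A*(A*(A*B))

lemma coverQ : ∀ g : P, pQ g := by
  intro g
  have hg : g ∈ Subgroup.closure ({A, B} : Set P) := by
    have h1 : (Set.range (PresentedGroup.of : Fin 2 → P)) ⊆ {A, B} := by
      rintro _ ⟨i, rfl⟩
      fin_cases i
      · exact Or.inl rfl
      · exact Or.inr rfl
    have h2 := Subgroup.closure_mono h1
    rw [PresentedGroup.closure_range_of] at h2
    exact h2 (Subgroup.mem_top g)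
  induction hg using Subgroup.closure_induction_right with
  | one => exact Or.inl rfl
  | mul_right x hx y hy px =>
      rcases hy with rfl | rfl <;>
        rcases px with rfl|rfl|rfl|rfl|rfl|rfl|rfl|rfl <;>
          simp [pQ, mul_assoc, r3, r3', r1, r1', r2, hB2]
  | mul_inv_cancel x hx y hy px =>
      rcases hy with rfl | rfl
      · rw [invA]
        rcases px with rfl|rfl|rfl|rfl|rfl|rfl|rfl|rfl <;>
          simp [pQ, mul_assoc, r3, r3', r1, r1', r2, hB2]
      · rw [invB]
        rcases px with rfl|rfl|rfl|rfl|rfl|rfl|rfl|rfl <;>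
          simp [pQ, mul_assoc, r3, r3', r1, r1', r2, hB2]

end Stmt5Aux

namespace Stmt5Aux
open QuaternionGroup

abbrev D := QuaternionGroup 2

def fQ : Fin 2 → D := ![a 1, xa 0]

lemma relsQ : ∀ r ∈ Q8Rels, FreeGroup.lift fQ r = 1 := by
  rintro r (rfl | rfl | rfl) <;>
    · simp only [map_pow, map_mul, map_inv, FreeGroup.lift_apply_of, fQ, Matrix.cons_val_zero,
        Matrix.cons_val_one, Matrix.head_cons]
      decide

def phiQ : P →* D := PresentedGroup.toGroup relsQ

lemma phiQ_A : phiQ A = a 1 := by simp [phiQ, A, PresentedGroup.toGroup.of, fQ]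
lemma phiQ_B : phiQ B = xa 0 := by simp [phiQ, B, PresentedGroup.toGroup.of, fQ]

lemma phiQ_surj : Function.Surjective phiQ := by
  rintro (i | i)
  · exact ⟨A^(i.val), by simp [map_pow, phiQ_A, a_one_pow, ZMod.natCast_val, ZMod.cast_id]⟩
  · refine ⟨B * A^(i.val), ?_⟩
    simp [map_mul, map_pow, phiQ_A, phiQ_B, a_one_pow, ZMod.natCast_val, ZMod.cast_id]

def fQ8 : Fin 8 → P := ![1, A, A*A, A*(A*A), B, A*B, A*(A*B), A*(A*(A*B))]

lemma fQ8_surj : Function.Surjective fQ8 := by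
  intro g
  rcases coverQ g with rfl|rfl|rfl|rfl|rfl|rfl|rfl|rfl
  exacts [⟨0, rfl⟩, ⟨1, rfl⟩, ⟨2, rfl⟩, ⟨3, rfl⟩, ⟨4, rfl⟩, ⟨5, rfl⟩, ⟨6, rfl⟩, ⟨7, rfl⟩]

instance : Finite P := Finite.of_surjective fQ8 fQ8_surj

lemma cardD : Nat.card D = 8 := by rw [Nat.card_eq_fintype_card]; rfl

lemma cardP : Nat.card P = 8 := by
  refine le_antisymm ?_ ?_
  · simpa using Nat.card_le_card_of_surjective fQ8 fQ8_surj
  · rw [← cardD]; exact Nat.card_le_card_of_surjective phiQ phiQ_surj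

noncomputable def eQ : P ≃* D :=
  MulEquiv.ofBijective phiQ
    ((Nat.bijective_iff_surjective_and_card phiQ).mpr ⟨phiQ_surj, by rw [cardP, cardD]⟩)

end Stmt5Aux

namespace Stmt5Aux
open QuaternionGroup

set_option maxHeartbeats 2000000 in
abbrev M := PresentedGroup M22Rels
def X : M := PresentedGroup.of 0
def Y : M := PresentedGroup.of 1

lemma hX4 : X^4 = 1 := by
  simpa [X, PresentedGroup.of] using rel_eq_one (rels := M22Rels) (Or.inl rfl)

lemma hY4 : Y^4 = 1 := by
  simpa [Y, PresentedGroup.of] using rel_eq_one (rels := M22Rels) (Or.inr (Or.inl rfl))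

lemma hXY : X*Y = Y*(X*(X*X)) := by
  have := rel_eq_one (rels := M22Rels) (Or.inr (Or.inr rfl))
  have h : (X*Y) * (Y*X^3)⁻¹ = 1 := by simpa [X, Y, PresentedGroup.of] using this
  have h2 := mul_inv_eq_one.mp h
  rw [h2, pow_succ, pow_succ, pow_one, mul_assoc]

lemma m1' : X*(X*(X*X)) = 1 := by
  have := hX4; rw [pow_succ, pow_succ, pow_succ, pow_one] at this
  simpa [mul_assoc] using this

lemma m1 (t : M) : X*(X*(X*(X*t))) = t := by
  rw [← mul_assoc, ← mul_assoc, ← mul_assoc,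
    show X*X*X*X = X*(X*(X*X)) by simp [mul_assoc], m1', one_mul]

lemma m2' : Y*(Y*(Y*Y)) = 1 := by
  have := hY4; rw [pow_succ, pow_succ, pow_succ, pow_one] at this
  simpa [mul_assoc] using this

lemma m2 (t : M) : Y*(Y*(Y*(Y*t))) = t := by
  rw [← mul_assoc, ← mul_assoc, ← mul_assoc,
    show Y*Y*Y*Y = Y*(Y*(Y*Y)) by simp [mul_assoc], m2', one_mul]

lemma m3' : Y*X = X*(Y*(X*X)) := by
  have h : X*(Y*(X*X)) = Y*X := by
    rw [← mul_assoc, hXY]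
    simp only [mul_assoc, m1]
  exact h.symm

lemma m3 (t : M) : Y*(X*t) = X*(Y*(X*(X*t))) := by
  rw [← mul_assoc, m3', mul_assoc, mul_assoc, mul_assoc]

lemma invX : X⁻¹ = X*(X*X) := inv_eq_of_mul_eq_one_right m1'
lemma invY : Y⁻¹ = Y*(Y*Y) := inv_eq_of_mul_eq_one_right m2'

def pM (g : M) : Prop :=
  g = 1 ∨ g = Y ∨ g = Y*Y ∨ g = Y*(Y*Y) ∨
  g = X ∨ g = X*Y ∨ g = X*(Y*Y) ∨ g = X*(Y*(Y*Y)) ∨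
  g = X*X ∨ g = X*(X*Y) ∨ g = X*(X*(Y*Y)) ∨ g = X*(X*(Y*(Y*Y))) ∨
  g = X*(X*X) ∨ g = X*(X*(X*Y)) ∨ g = X*(X*(X*(Y*Y))) ∨ g = X*(X*(X*(Y*(Y*Y))))

set_option maxHeartbeats 4000000 in
lemma coverM : ∀ g : M, pM g := by
  intro g
  have hg : g ∈ Subgroup.closure ({X, Y} : Set M) := by
    have h1 : (Set.range (PresentedGroup.of : Fin 2 → M)) ⊆ {X, Y} := by
      rintro _ ⟨i, rfl⟩
      fin_cases i
      · exact Or.inl rfl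
      · exact Or.inr rfl
    have h2 := Subgroup.closure_mono h1
    rw [PresentedGroup.closure_range_of] at h2
    exact h2 (Subgroup.mem_top g)
  induction hg using Subgroup.closure_induction_right with
  | one => exact Or.inl rfl
  | mul_right x hx y hy px =>
      rcases hy with rfl | rfl <;>
        rcases px with rfl|rfl|rfl|rfl|rfl|rfl|rfl|rfl|rfl|rfl|rfl|rfl|rfl|rfl|rfl|rfl <;>
          simp [pM, mul_assoc, m3, m3', m1, m1', m2, m2']
  | mul_inv_cancel x hx y hy px =>
      rcases hy with rfl | rfl
      · rw [invX]
        rcases px with rfl|rfl|rfl|rfl|rfl|rfl|rfl|rfl|rfl|rfl|rfl|rfl|rfl|rfl|rfl|rfl <;>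
          simp [pM, mul_assoc, m3, m3', m1, m1', m2, m2']
      · rw [invY]
        rcases px with rfl|rfl|rfl|rfl|rfl|rfl|rfl|rfl|rfl|rfl|rfl|rfl|rfl|rfl|rfl|rfl <;>
          simp [pM, mul_assoc, m3, m3', m1, m1', m2, m2']

end Stmt5Aux

namespace Stmt5Aux
open QuaternionGroup

def u : D × D := (a 1, 1)
def v : D × D := (a 1 * xa 0, xa 0)

def fM : Fin 2 → D × D := ![u, v]

lemma relsM : ∀ r ∈ M22Rels, FreeGroup.lift fM r = 1 := by
  rintro r (rfl | rfl | rfl) <;>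
    · simp only [map_pow, map_mul, map_inv, FreeGroup.lift_apply_of, fM, Matrix.cons_val_zero,
        Matrix.cons_val_one, Matrix.head_cons]
      decide

def phiM : M →* D × D := PresentedGroup.toGroup relsM

lemma phiM_X : phiM X = u := by simp [phiM, X, PresentedGroup.toGroup.of, fM]
lemma phiM_Y : phiM Y = v := by simp [phiM, Y, PresentedGroup.toGroup.of, fM]

def fM16 : Fin 16 → M := fun k => X^((k:ℕ) / 4) * Y^((k:ℕ) % 4)
def w16 : Fin 16 → D × D := fun k => u^((k:ℕ) / 4) * v^((k:ℕ) % 4)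

lemma phiM_fM16 (k : Fin 16) : phiM (fM16 k) = w16 k := by
  simp [fM16, w16, map_mul, map_pow, phiM_X, phiM_Y]

lemma w16_inj : Function.Injective w16 := by decide

lemma fM16_surj : Function.Surjective fM16 := by
  intro g
  rcases coverM g with rfl|rfl|rfl|rfl|rfl|rfl|rfl|rfl|rfl|rfl|rfl|rfl|rfl|rfl|rfl|rfl
  exacts [⟨(⟨0, by norm_num⟩ : Fin 16), by simp [fM16, pow_succ, mul_assoc]⟩,
    ⟨(⟨1, by norm_num⟩ : Fin 16), by simp [fM16, pow_succ, mul_assoc]⟩,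
    ⟨(⟨2, by norm_num⟩ : Fin 16), by simp [fM16, pow_succ, mul_assoc]⟩,
    ⟨(⟨3, by norm_num⟩ : Fin 16), by simp [fM16, pow_succ, mul_assoc]⟩,
    ⟨(⟨4, by norm_num⟩ : Fin 16), by simp [fM16, pow_succ, mul_assoc]⟩,
    ⟨(⟨5, by norm_num⟩ : Fin 16), by simp [fM16, pow_succ, mul_assoc]⟩,
    ⟨(⟨6, by norm_num⟩ : Fin 16), by simp [fM16, pow_succ, mul_assoc]⟩,
    ⟨(⟨7, by norm_num⟩ : Fin 16), by simp [fM16, pow_succ, mul_assoc]⟩,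
    ⟨(⟨8, by norm_num⟩ : Fin 16), by simp [fM16, pow_succ, mul_assoc]⟩,
    ⟨(⟨9, by norm_num⟩ : Fin 16), by simp [fM16, pow_succ, mul_assoc]⟩,
    ⟨(⟨10, by norm_num⟩ : Fin 16), by simp [fM16, pow_succ, mul_assoc]⟩,
    ⟨(⟨11, by norm_num⟩ : Fin 16), by simp [fM16, pow_succ, mul_assoc]⟩,
    ⟨(⟨12, by norm_num⟩ : Fin 16), by simp [fM16, pow_succ, mul_assoc]⟩,
    ⟨(⟨13, by norm_num⟩ : Fin 16), by simp [fM16, pow_succ, mul_assoc]⟩,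
    ⟨(⟨14, by norm_num⟩ : Fin 16), by simp [fM16, pow_succ, mul_assoc]⟩,
    ⟨(⟨15, by norm_num⟩ : Fin 16), by simp [fM16, pow_succ, mul_assoc]⟩]

instance : Finite M := Finite.of_surjective fM16 fM16_surj

lemma fM16_inj : Function.Injective fM16 :=
  fun i j h => w16_inj (by rw [← phiM_fM16, ← phiM_fM16, h])

lemma cardM : Nat.card M = 16 := by
  refine le_antisymm ?_ ?_
  · simpa using Nat.card_le_card_of_surjective fM16 fM16_surj
  · simpa using Nat.card_le_card_of_injective fM16 fM16_inj

lemma cardRangeM : Nat.card phiM.range = 16 := by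
  refine le_antisymm ?_ ?_
  · rw [← cardM]
    exact Nat.card_le_card_of_surjective phiM.rangeRestrict phiM.rangeRestrict_surjective
  · have hinj : Function.Injective (phiM.rangeRestrict ∘ fM16) := by
      intro i j hij
      refine w16_inj ?_
      have := congrArg Subtype.val hij
      simpa [phiM_fM16] using this
    simpa using Nat.card_le_card_of_injective _ hinj

lemma bijMr : Function.Bijective phiM.rangeRestrict :=
  (Nat.bijective_iff_surjective_and_card _).mpr
    ⟨phiM.rangeRestrict_surjective, by rw [cardM, cardRangeM]⟩

noncomputable def eM : M ≃* phiM.range := MulEquiv.ofBijective _ bijMr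

lemma rangeM : phiM.range = Subgroup.closure {u, v} := by
  rw [MonoidHom.range_eq_map, ← PresentedGroup.closure_range_of M22Rels,
    MonoidHom.map_closure]
  congr 1
  ext d
  constructor
  · rintro ⟨_, ⟨i, rfl⟩, rfl⟩
    fin_cases i
    · exact Or.inl phiM_X
    · exact Or.inr phiM_Y
  · rintro (rfl | rfl)
    · exact ⟨X, ⟨0, rfl⟩, phiM_X⟩
    · exact ⟨Y, ⟨1, rfl⟩, phiM_Y⟩

end Stmt5Aux

namespace Stmt5Aux
open QuaternionGroup

noncomputable def e2 : P × P ≃* D × D := MulEquiv.prodCongr eQ eQ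

lemma e2_pair (x y : P) : e2 (x, y) = (phiQ x, phiQ y) := rfl

lemma mapH :
    (Subgroup.closure {(A, (1:P)), (A * B, B)}).map e2.toMonoidHom
      = Subgroup.closure {u, v} := by
  rw [MonoidHom.map_closure]
  congr 1
  rw [Set.image_insert_eq, Set.image_singleton]
  have h1 : e2.toMonoidHom (A, (1:P)) = u := by
    rw [MulEquiv.coe_toMonoidHom, e2_pair, map_one, phiQ_A]; rfl
  have h2 : e2.toMonoidHom (A * B, B) = v := by
    rw [MulEquiv.coe_toMonoidHom, e2_pair, map_mul, phiQ_A, phiQ_B]; rfl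
  rw [h1, h2]

noncomputable def isoH :
    (Subgroup.closure {(A, (1:P)), (A * B, B)}) ≃* M :=
  ((Subgroup.closure {(A, (1:P)), (A * B, B)}).equivMapOfInjective
      e2.toMonoidHom e2.injective).trans
    ((MulEquiv.subgroupCongr (mapH.trans rangeM.symm)).trans eM.symm)

lemma noncommM : ¬ ∀ g h : M, g * h = h * g := by
  intro hcomm
  have h := hcomm X Y
  have huv : u * v = v * u := by
    simpa [map_mul, phiM_X, phiM_Y] using congrArg phiM h
  exact absurd huv (by decide)

end Stmt5Aux

/-- In `Q8 × Q8`, the subgroup generated by `(a, 1)` and `(ab, b)` is isomorphic to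
the metacyclic group `M_2(2,2)`, a nonabelian group of order 16. -/
theorem stmt_5 :
    letI Q8 := PresentedGroup Q8Rels
    letI A : Q8 := PresentedGroup.of 0
    letI B : Q8 := PresentedGroup.of 1
    letI H : Subgroup (Q8 × Q8) := Subgroup.closure {(A, 1), (A * B, B)}
    Nonempty (H ≃* PresentedGroup M22Rels) ∧
      Nat.card (PresentedGroup M22Rels) = 16 ∧
      ¬ ∀ g h : PresentedGroup M22Rels, g * h = h * g :=
  ⟨⟨Stmt5Aux.isoH⟩, Stmt5Aux.cardM, Stmt5Aux.noncommM⟩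
end

section
/- A semigroup S with zero element 0 admits a flat semiring structure (with addition a+b = a if a = b, and a+b = 0 if a ≠ b) satisfying both distributive laws if and only if S is 0-cancellative: for all a, b, c ∈ S, ab = ac ≠ 0 implies b = c, and ba = ca ≠ 0 implies b = c. -/
/-- A semigroup `S` with zero element `z` admits a flat semiring structure
(addition `a + b = a` if `a = b` and `a + b = z` otherwise) satisfying both
distributive laws if and only if `S` is `0`-cancellative. -/
theorem stmt_6 (S : Type) [Semigroup S] [DecidableEq S] (z : S)
    (hz : ∀ x : S, z * x = z ∧ x * z = z) :
    ((∀ a b c : S, a * (if b = c then b else z) = if a * b = a * c then a * b else z) ∧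
     (∀ a b c : S, (if b = c then b else z) * a = if b * a = c * a then b * a else z)) ↔
    ((∀ a b c : S, a * b = a * c → a * b ≠ z → b = c) ∧
     (∀ a b c : S, b * a = c * a → b * a ≠ z → b = c)) := by
  constructor
  · rintro ⟨h1, h2⟩
    constructor
    · intro a b c heq hne
      by_contra hbc
      have := h1 a b c
      rw [if_neg hbc, if_pos heq, (hz a).2] at this
      exact hne (heq ▸ this.symm)
    · intro a b c heq hne
      by_contra hbc
      have := h2 a b c
      rw [if_neg hbc, if_pos heq, (hz a).1] at this
      exact hne (heq ▸ this.symm)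
  · rintro ⟨h1, h2⟩
    constructor
    · intro a b c
      by_cases hbc : b = c
      · rw [if_pos hbc, hbc, if_pos rfl]
      · rw [if_neg hbc, (hz a).2]
        by_cases habc : a * b = a * c
        · rw [if_pos habc]
          by_contra hne
          exact hbc (h1 a b c habc (fun h => hne h.symm))
        · rw [if_neg habc]
    · intro a b c
      by_cases hbc : b = c
      · rw [if_pos hbc, hbc, if_pos rfl]
      · rw [if_neg hbc, (hz a).1]
        by_cases habc : b * a = c * a
        · rw [if_pos habc]
          by_contra hne
          exact hbc (h2 a b c habc (fun h => hne h.symm))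
        · rw [if_neg habc]
end

section
/- Every nontrivial subdirectly irreducible flat semiring satisfying the identities xy ≈ yx, x²y ≈ x², and x₁x₂x₃ ≈ y₁y₂y₃ and failing x₁x₂ ≈ y₁y₂ has a multiplication table in which every product of two equal elements distinct from 0 and the unique minimal nonzero element ω is 0, the product ab of any two distinct such elements is either 0 or ω, each such element a has exactly one partner b with ab = ω, and the multiplicative table is symmetric. -/
open scoped Classical

/-- Collapse a multiplicative ideal containing the zero `z` to a single class. -/
def collapseCon (S : Type) [Semigroup S] [Add S] (z : S)
    (hadd : ∀ a b : S, a + b = if a = b then a else z)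
    (P : S → Prop) (hPz : P z)
    (hIl : ∀ s x : S, P x → P (s * x)) (hIr : ∀ s x : S, P x → P (x * s)) :
    RingCon S where
  r x y := x = y ∨ (P x ∧ P y)
  iseqv := ⟨fun _ => Or.inl rfl,
    fun h => by rcases h with h | h; exact Or.inl h.symm; exact Or.inr ⟨h.2, h.1⟩,
    fun h h' => by
      rcases h with h | h
      · rw [h]; exact h'
      · rcases h' with h' | h'
        · exact Or.inr ⟨h.1, h' ▸ h.2⟩
        · exact Or.inr ⟨h.1, h'.2⟩⟩
  mul' := by
    rintro a b c d (rfl | ⟨h1, h2⟩) (rfl | ⟨h3, h4⟩)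
    · exact Or.inl rfl
    · exact Or.inr ⟨hIl a _ h3, hIl a _ h4⟩
    · exact Or.inr ⟨hIr c _ h1, hIr c _ h2⟩
    · exact Or.inr ⟨hIr c _ h1, hIr d _ h2⟩
  add' := by
    have hsumP : ∀ x w : S, P x → P (x + w) := by
      intro x w hx
      rw [hadd]
      split_ifs
      · exact hx
      · exact hPz
    have hsumP' : ∀ x w : S, P w → P (x + w) := by
      intro x w hw
      rw [hadd]
      split_ifs with h
      · exact h ▸ hw
      · exact hPz
    rintro a b c d (rfl | ⟨h1, h2⟩) (rfl | ⟨h3, h4⟩)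
    · exact Or.inl rfl
    · exact Or.inr ⟨hsumP' a c h3, hsumP' a d h4⟩
    · exact Or.inr ⟨hsumP a c h1, hsumP b c h2⟩
    · exact Or.inr ⟨hsumP a c h1, hsumP b d h2⟩

/-- Every nontrivial subdirectly irreducible flat semiring satisfying
`xy ≈ yx`, `x²y ≈ x²` and `x₁x₂x₃ ≈ y₁y₂y₃`, but failing `x₁x₂ ≈ y₁y₂`, has a unique
minimal nonzero element `ω` such that: every square of an element distinct from `0` and
`ω` is `0`; the product of two distinct such elements is `0` or `ω`; each such element
has exactly one partner with product `ω`; and the multiplication table is symmetric.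
Subdirect irreducibility is expressed via a monolith pair: elements `u ≠ v` identified
by every nontrivial semiring congruence. -/
theorem stmt_8 (S : Type) [Semigroup S] [Add S] (z : S)
    (hz : ∀ x : S, z * x = z ∧ x * z = z)
    (hadd : ∀ a b : S, a + b = if a = b then a else z)
    (hdist : ∀ a b c : S, a * (b + c) = a * b + a * c ∧ (b + c) * a = b * a + c * a)
    (hnt : ∃ a b : S, a ≠ b)
    (hSI : ∃ u v : S, u ≠ v ∧ ∀ c : RingCon S, (∃ x y : S, x ≠ y ∧ c x y) → c u v)
    (hcomm : ∀ x y : S, x * y = y * x)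
    (hsq : ∀ x y : S, x * x * y = x * x)
    (h3 : ∀ x₁ x₂ x₃ y₁ y₂ y₃ : S, x₁ * x₂ * x₃ = y₁ * y₂ * y₃)
    (hfail : ¬ ∀ a b c d : S, a * b = c * d) :
    ∃ ω : S, ω ≠ z ∧
      (∀ a : S, a ≠ z → a ≠ ω → a * a = z) ∧
      (∀ a b : S, a ≠ z → a ≠ ω → b ≠ z → b ≠ ω → a ≠ b → a * b = z ∨ a * b = ω) ∧
      (∀ a : S, a ≠ z → a ≠ ω → ∃! b : S, a * b = ω) ∧
      (∀ a b : S, a * b = b * a) := by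
  obtain ⟨u, v, huv, hmono⟩ := hSI
  -- every square is z
  have hsqz : ∀ x : S, x * x = z := fun x => by
    have := hsq x z
    rw [(hz (x * x)).2] at this
    exact this.symm
  -- every triple product is z
  have htz : ∀ a b c : S, a * b * c = z := fun a b c => by
    rw [h3 a b c z z z, (hz z).1, (hz z).1]
  -- collapsing {z, p} for a nonzero product p shows {u,v} = {z,p}
  have key : ∀ a b : S, a * b ≠ z → ((u = z ∧ v = a * b) ∨ (u = a * b ∧ v = z)) := by
    intro a b hp
    have hIl : ∀ s x : S, (x = z ∨ x = a * b) → (s * x = z ∨ s * x = a * b) := by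
      rintro s x (rfl | rfl)
      · exact Or.inl (hz s).2
      · left; rw [← mul_assoc]; exact htz s a b
    have hIr : ∀ s x : S, (x = z ∨ x = a * b) → (x * s = z ∨ x * s = a * b) := by
      intro s x hx
      rw [hcomm]; exact hIl s x hx
    let c := collapseCon S z hadd (fun x => x = z ∨ x = a * b) (Or.inl rfl) hIl hIr
    have hc : c u v := hmono c ⟨z, a * b, Ne.symm hp, Or.inr ⟨Or.inl rfl, Or.inr rfl⟩⟩
    rcases hc with h | ⟨hu, hv⟩
    · exact absurd h huv
    · rcases hu with rfl | hu <;> rcases hv with rfl | hv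
      · exact absurd rfl huv
      · exact Or.inl ⟨rfl, hv⟩
      · exact Or.inr ⟨hu, rfl⟩
      · exact absurd (hu.trans hv.symm) huv
  -- a nonzero product exists
  push_neg at hfail
  obtain ⟨a0, b0, c0, d0, hne⟩ := hfail
  have hex : ∃ a b : S, a * b ≠ z := by
    by_cases h : a0 * b0 = z
    · exact ⟨c0, d0, fun h' => hne (h.trans h'.symm)⟩
    · exact ⟨a0, b0, h⟩
  obtain ⟨a1, b1, hω⟩ := hex
  -- all nonzero products are equal to ω := a1 * b1
  have huniq : ∀ a b : S, a * b ≠ z → a * b = a1 * b1 := by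
    intro a b hp
    rcases key a b hp with ⟨h1, h2⟩ | ⟨h1, h2⟩ <;>
      rcases key a1 b1 hω with ⟨h3, h4⟩ | ⟨h3, h4⟩
    · exact h2.symm.trans h4
    · exact absurd (h3.symm.trans h1) hω
    · exact absurd (h1.symm.trans h3) hp
    · exact h1.symm.trans h3
  have hprod : ∀ a b : S, a * b = z ∨ a * b = a1 * b1 := by
    intro a b
    by_cases h : a * b = z
    · exact Or.inl h
    · exact Or.inr (huniq a b h)
  refine ⟨a1 * b1, hω, fun a _ _ => hsqz a, fun a b _ _ _ _ _ => hprod a b, ?_, hcomm⟩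
  intro a haz haω
  -- existence of a partner
  have hexb : ∃ b : S, a * b = a1 * b1 := by
    by_contra h
    push_neg at h
    have hall : ∀ s : S, a * s = z := by
      intro s
      rcases hprod a s with h' | h'
      · exact h'
      · exact absurd h' (h s)
    have hIl : ∀ s x : S, (x = z ∨ x = a) → (s * x = z ∨ s * x = a) := by
      rintro s x (rfl | rfl)
      · exact Or.inl (hz s).2
      · left; rw [hcomm]; exact hall s
    have hIr : ∀ s x : S, (x = z ∨ x = a) → (x * s = z ∨ x * s = a) := by
      intro s x hx; rw [hcomm]; exact hIl s x hx
    let c := collapseCon S z hadd (fun x => x = z ∨ x = a) (Or.inl rfl) hIl hIr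
    have hc : c u v := hmono c ⟨z, a, Ne.symm haz, Or.inr ⟨Or.inl rfl, Or.inr rfl⟩⟩
    have hca : (u = z ∧ v = a) ∨ (u = a ∧ v = z) := by
      rcases hc with h' | ⟨hu, hv⟩
      · exact absurd h' huv
      · rcases hu with rfl | hu <;> rcases hv with rfl | hv
        · exact absurd rfl huv
        · exact Or.inl ⟨rfl, hv⟩
        · exact Or.inr ⟨hu, rfl⟩
        · exact absurd (hu.trans hv.symm) huv
    rcases hca with ⟨h1, h2⟩ | ⟨h1, h2⟩ <;> rcases key a1 b1 hω with ⟨h3, h4⟩ | ⟨h3, h4⟩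
    · exact haω (h2.symm.trans h4)
    · exact hω (h3.symm.trans h1)
    · exact haz (h1.symm.trans h3)
    · exact haω (h1.symm.trans h3)
  obtain ⟨b, hb⟩ := hexb
  refine ⟨b, hb, fun b' hb' => ?_⟩
  by_contra hbb
  have hsum : b' + b = z := by rw [hadd]; simp [hbb]
  have := (hdist a b' b).1
  rw [hsum, hb, hb', hadd, if_pos rfl, (hz a).2] at this
  exact hω this.symm
end

section
/- Every flat semiring satisfying the identities xy + x ≈ xy and xy ≈ yx that is subdirectly irreducible is isomorphic to one of the two 2-element flat semirings: S(a) (where ω² = 0) or M(1) (where ω² = ω). -/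
open scoped Classical

/-- Every subdirectly irreducible flat semiring satisfying `xy + x ≈ xy` and `xy ≈ yx`
is isomorphic to one of the two 2-element flat semirings `S(a)` (where `ω² = 0`) or
`M(1)` (where `ω² = ω`): its carrier is `{0, ω}` for a single nonzero element `ω`, and
`ω·ω` is `0` or `ω`.  Subdirect irreducibility is expressed via a monolith pair:
elements `u ≠ v` identified by every nontrivial semiring congruence. -/
theorem stmt_11 (S : Type) [Semigroup S] [Add S] (z : S)
    (hz : ∀ x : S, z * x = z ∧ x * z = z)
    (hadd : ∀ a b : S, a + b = if a = b then a else z)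
    (hdist : ∀ a b c : S, a * (b + c) = a * b + a * c ∧ (b + c) * a = b * a + c * a)
    (hSI : ∃ u v : S, u ≠ v ∧ ∀ c : RingCon S, (∃ x y : S, x ≠ y ∧ c x y) → c u v)
    (hid : ∀ x y : S, x * y + x = x * y)
    (hcomm : ∀ x y : S, x * y = y * x) :
    ∃ ω : S, ω ≠ z ∧ (∀ x : S, x = z ∨ x = ω) ∧ (ω * ω = z ∨ ω * ω = ω) := by
  -- products are z or idempotent
  have hmul : ∀ x y : S, x * y = z ∨ x * y = x := by
    intro x y
    have h := hid x y
    rw [hadd] at h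
    by_cases hxy : x * y = x
    · exact Or.inr hxy
    · simp [hxy] at h; exact Or.inl h.symm
  -- if x ≠ y then x*y = z (unless x*y = x = y)
  have hmulne : ∀ x y : S, x ≠ y → x * y = z := by
    intro x y hxy
    rcases hmul x y with h | h
    · exact h
    · rcases hmul y x with h2 | h2
      · rw [hcomm]; exact h2
      · rw [hcomm x y, h2] at h; exact absurd h.symm hxy
  obtain ⟨u, v, huv, hmono⟩ := hSI
  -- for each nonzero a, the map collapsing a to z gives a congruence
  have key : ∀ a : S, a ≠ z → (u = a ∧ v = z) ∨ (u = z ∧ v = a) := by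
    intro a ha
    set f : S → S := fun x => if x = a then z else x with hf
    have fmul : ∀ x y : S, f (x * y) = f x * f y := by
      intro x y
      by_cases hx : x = a <;> by_cases hy : y = a
      · rw [hx, hy]
        rcases hmul a a with h | h <;> simp [hf, h, (hz z).1]
      · have h1 : x * y = z := hmulne x y (fun he => hy (he ▸ hx))
        rw [hx] at h1
        simp [hf, h1, hx, hy, (hz _).1]
      · have h1 : x * y = z := hmulne x y (fun he => hx (he.symm ▸ hy))
        rw [hy] at h1
        simp [hf, h1, hx, hy, (hz _).2]
      · have hne : x * y ≠ a := by
          rcases hmul x y with h | h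
          · rw [h]; exact Ne.symm ha
          · rw [h]; exact hx
        simp [hf, hne, hx, hy]
    have fadd : ∀ x y : S, f (x + y) = f x + f y := by
      intro x y
      by_cases hxy : x = y
      · subst hxy; rw [hadd, hadd, if_pos rfl, if_pos rfl]
      · rw [hadd x y, if_neg hxy, hadd]
        by_cases hfe : f x = f y
        · -- then x,y both collapse to z
          have : f x = z := by
            by_cases hx : x = a <;> by_cases hy : y = a
            · exact absurd (hx.trans hy.symm) hxy
            · simp [hf, hx]
            · simp only [hf, hy, if_pos] at hfe ⊢
              simp only [if_neg hx] at hfe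
              simp [hfe]
            · simp only [hf, if_neg hx, if_neg hy] at hfe; exact absurd hfe hxy
          rw [if_pos hfe, this]
          have hza : z ≠ a := Ne.symm ha
          simp [hf, hza]
        · rw [if_neg hfe]
          have hza : z ≠ a := Ne.symm ha
          simp [hf, hza]
    let c : RingCon S :=
      { r := fun x y => f x = f y
        iseqv := ⟨fun _ => rfl, Eq.symm, Eq.trans⟩
        mul' := fun {w x y t} h1 h2 => by
          show f (w * y) = f (x * t); rw [fmul, fmul, h1, h2]
        add' := fun {w x y t} h1 h2 => by
          show f (w + y) = f (x + t); rw [fadd, fadd, h1, h2] }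
    have hc : c u v := by
      apply hmono
      refine ⟨a, z, ha, ?_⟩
      show f a = f z
      simp [hf, Ne.symm ha]
    -- c u v means f u = f v with u ≠ v
    have hfe : f u = f v := hc
    by_cases hu : u = a <;> by_cases hv : v = a
    · exact absurd (hu.trans hv.symm) huv
    · left; refine ⟨hu, ?_⟩
      simp only [hf, if_pos hu, if_neg hv] at hfe
      exact hfe.symm
    · right; refine ⟨?_, hv⟩
      simp only [hf, if_neg hu, if_pos hv] at hfe
      exact hfe
    · simp only [hf, if_neg hu, if_neg hv] at hfe
      exact absurd hfe huv
  -- now pick ω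
  by_cases huz : u = z
  · have hvz : v ≠ z := fun h => huv (huz.trans h.symm)
    refine ⟨v, hvz, ?_, ?_⟩
    · intro x
      by_cases hx : x = z
      · exact Or.inl hx
      · rcases key x hx with ⟨h1, _⟩ | ⟨_, h2⟩
        · exact absurd (huz ▸ h1 : z = x) (Ne.symm hx)
        · exact Or.inr h2.symm
    · rcases hmul v v with h | h
      · exact Or.inl h
      · exact Or.inr h
  · refine ⟨u, huz, ?_, ?_⟩
    · intro x
      by_cases hx : x = z
      · exact Or.inl hx
      · rcases key x hx with ⟨h1, _⟩ | ⟨h2, _⟩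
        · exact Or.inr h1.symm
        · exact absurd h2 huz
    · rcases hmul u u with h | h
      · exact Or.inl h
      · exact Or.inr h
end

section
/- In the flat semiring S(p_n) built on the word p_n = x₀³ (∏_{i=1}^n y_i²) x₁³, the identity xyz + yzx ≈ xyz + yzx + xxx holds: for any elements u, v, w, if both uvw and vwu are nonzero, then u = v = w and u³ is a factor-element, making both sides equal. -/
open scoped Classical

/-- The word `p_n = x₀³ (∏_{i=1}^n y_i²) x₁³`, over the alphabet `ℕ` with `x₀ = 0`,
`x₁ = 1` and `y_i = i + 1`. -/
def pWord (n : ℕ) : List ℕ :=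
  [0, 0, 0] ++ ((List.range n).map (fun i => [i + 2, i + 2])).flatten ++ [1, 1, 1]

/-- The carrier of the flat semiring `S(w)`: `0` (i.e. `none`) together with the
nonempty factors (contiguous subwords) of the word `w`. -/
def FlatWord (w : List ℕ) : Type := Option {u : List ℕ // u ≠ [] ∧ u <:+: w}

/-- Multiplication in `S(w)`: concatenation when the result is a factor of `w`,
and `0` otherwise. -/
noncomputable def fwMul (w : List ℕ) : FlatWord w → FlatWord w → FlatWord w
  | some u, some v =>
      if h : (u.1 ++ v.1) <:+: w then
        some ⟨u.1 ++ v.1, ⟨by simp [u.2.1], h⟩⟩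
      else none
  | _, _ => none

/-- Flat addition in `S(w)`: `s + s = s` and `s + t = 0` for `s ≠ t`. -/
noncomputable def fwAdd (w : List ℕ) (s t : FlatWord w) : FlatWord w :=
  if s = t then s else none

namespace Stmt18

def pMid (n : ℕ) : List ℕ := ((List.range n).map (fun i => [i + 2, i + 2])).flatten

lemma pWord_eq (n : ℕ) : pWord n = [0,0,0] ++ pMid n ++ [1,1,1] := rfl

lemma pMid_succ (n : ℕ) : pMid (n+1) = pMid n ++ [n+2, n+2] := by
  simp [pMid, List.range_succ]

lemma mem_pMid {n a : ℕ} (h : a ∈ pMid n) : 2 ≤ a ∧ a ≤ n + 1 := by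
  induction n with
  | zero => simp [pMid] at h
  | succ n ih =>
    rw [pMid_succ] at h
    rcases List.mem_append.1 h with h | h
    · have := ih h; omega
    · simp at h; omega

lemma count_pMid (c n : ℕ) :
    (pMid n).count c = if 2 ≤ c ∧ c ≤ n + 1 then 2 else 0 := by
  induction n with
  | zero =>
    have : pMid 0 = [] := rfl
    rw [this]
    simp only [List.count_nil]
    rw [if_neg (by omega)]
  | succ n ih =>
    rw [pMid_succ, List.count_append, ih]
    have h2 : List.count c [n+2, n+2] = if c = n+2 then 2 else 0 := by
      rcases eq_or_ne c (n+2) with rfl | h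
      · simp
      · simp [List.count_cons, Ne.symm h, h]
    rw [h2]
    split_ifs <;> omega

lemma count_pWord (c n : ℕ) :
    (pWord n).count c = (if c = 0 then 3 else 0)
      + (if 2 ≤ c ∧ c ≤ n + 1 then 2 else 0) + (if c = 1 then 3 else 0) := by
  rw [pWord_eq, List.count_append, List.count_append, count_pMid]
  have h0 : List.count c [0,0,0] = if c = 0 then 3 else 0 := by
    rcases eq_or_ne c 0 with rfl | h
    · simp
    · simp [List.count_cons, Ne.symm h, h]
  have h1 : List.count c [1,1,1] = if c = 1 then 3 else 0 := by
    rcases eq_or_ne c 1 with rfl | h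
    · simp
    · simp [List.count_cons, Ne.symm h, h]
  rw [h0, h1]

def fmap (n : ℕ) (c : ℕ) : ℕ := if c = 0 then 0 else if c = 1 then n + 2 else c - 1

lemma mem_pWord {n a : ℕ} (h : a ∈ pWord n) : a = 0 ∨ a = 1 ∨ (2 ≤ a ∧ a ≤ n + 1) := by
  rw [pWord_eq] at h
  rcases List.mem_append.1 h with h | h
  · rcases List.mem_append.1 h with h | h
    · simp at h; omega
    · exact Or.inr (Or.inr (mem_pMid h))
  · simp at h; omega

lemma fmap_inj {n a b : ℕ} (ha : a ∈ pWord n) (hb : b ∈ pWord n)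
    (h : fmap n a = fmap n b) : a = b := by
  have ha' := mem_pWord ha
  have hb' := mem_pWord hb
  unfold fmap at h
  split_ifs at h <;> omega

lemma pairwise_mid (n : ℕ) :
    List.Pairwise (· ≤ ·) ((pMid n).map (fun a => a - 1)) ∧
      (∀ b ∈ (pMid n).map (fun a => a - 1), 1 ≤ b ∧ b ≤ n) := by
  induction n with
  | zero => constructor <;> simp [pMid]
  | succ n ih =>
    rw [pMid_succ, List.map_append]
    constructor
    · rw [List.pairwise_append]
      refine ⟨ih.1, by simp, ?_⟩
      intro a ha b hb
      have := (ih.2 a ha).2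
      simp at hb
      omega
    · intro b hb
      rcases List.mem_append.1 hb with hb | hb
      · have := ih.2 b hb; omega
      · simp at hb; omega

lemma pairwise_q (n : ℕ) : List.Pairwise (· ≤ ·) ((pWord n).map (fmap n)) := by
  rw [pWord_eq, List.map_append, List.map_append]
  have hmid : (pMid n).map (fmap n) = (pMid n).map (fun a => a - 1) := by
    apply List.map_congr_left
    intro a ha
    have := mem_pMid ha
    unfold fmap
    rw [if_neg (by omega), if_neg (by omega)]
  rw [hmid]
  have h03 : ([0,0,0] : List ℕ).map (fmap n) = [0,0,0] := by simp [fmap]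
  have h13 : ([1,1,1] : List ℕ).map (fmap n) = [n+2,n+2,n+2] := by simp [fmap]
  rw [h03, h13, List.pairwise_append]
  obtain ⟨hp, hb⟩ := pairwise_mid n
  refine ⟨?_, ?_, ?_⟩
  · rw [List.pairwise_append]
    refine ⟨by simp, hp, ?_⟩
    intro a ha b hb'
    simp at ha
    omega
  · simp
  · intro a ha b hb'
    simp at hb'
    rcases List.mem_append.1 ha with ha | ha
    · simp at ha; omega
    · have := hb a ha; omega

/-- The key combinatorial lemma. -/
lemma key {n : ℕ} {u v w : List ℕ} (hu : u ≠ []) (hv : v ≠ []) (hw : w ≠ [])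
    (h1 : (u ++ v) ++ w <:+: pWord n) (h2 : (v ++ w) ++ u <:+: pWord n) :
    ∃ c, (c = 0 ∨ c = 1) ∧ u = [c] ∧ v = [c] ∧ w = [c] := by
  set f := fmap n with hf
  have hq := pairwise_q n
  have p1 : List.Pairwise (· ≤ ·) (u.map f ++ (v ++ w).map f) := by
    have hs : (u.map f ++ (v ++ w).map f) = ((u ++ v) ++ w).map f := by
      simp [List.map_append, List.append_assoc]
    rw [hs]
    exact List.Pairwise.sublist (List.Sublist.map f h1.sublist) hq
  have p2 : List.Pairwise (· ≤ ·) ((v ++ w).map f ++ u.map f) := by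
    have hs : ((v ++ w).map f ++ u.map f) = ((v ++ w) ++ u).map f := by
      simp [List.map_append]
    rw [hs]
    exact List.Pairwise.sublist (List.Sublist.map f h2.sublist) hq
  have c1 := (List.pairwise_append.1 p1).2.2
  have c2 := (List.pairwise_append.1 p2).2.2
  have memp : ∀ a ∈ (u ++ v) ++ w, a ∈ pWord n := fun a ha => h1.subset ha
  have eqall : ∀ a ∈ u, ∀ b ∈ v ++ w, a = b := by
    intro a ha b hb
    refine fmap_inj (memp a (by simp [ha])) (memp b ?_) (le_antisymm ?_ ?_)
    · rcases List.mem_append.1 hb with hb | hb <;> simp [hb]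
    · exact c1 (f a) (List.mem_map_of_mem ha) (f b) (List.mem_map_of_mem hb)
    · exact c2 (f b) (List.mem_map_of_mem hb) (f a) (List.mem_map_of_mem ha)
  obtain ⟨a0, u', rfl⟩ := List.exists_cons_of_ne_nil hu
  obtain ⟨b0, v', rfl⟩ := List.exists_cons_of_ne_nil hv
  set c := b0 with hc
  have hvwc : ∀ b ∈ (b0 :: v') ++ w, b = c := by
    intro b hb
    have h1' := eqall a0 (by simp) b hb
    have h2' := eqall a0 (by simp) c (by simp)
    omega
  have huc : ∀ a ∈ a0 :: u', a = c := by
    intro a ha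
    exact eqall a ha c (by simp)
  have hur : (a0 :: u') = List.replicate (a0 :: u').length c :=
    List.eq_replicate_iff.2 ⟨rfl, huc⟩
  have hvr : (b0 :: v') = List.replicate (b0 :: v').length c :=
    List.eq_replicate_iff.2 ⟨rfl, fun b hb => hvwc b (by
      simp only [List.cons_append, List.mem_cons, List.mem_append] at hb ⊢; tauto)⟩
  have hwr : w = List.replicate w.length c :=
    List.eq_replicate_iff.2 ⟨rfl, fun b hb => hvwc b (by simp [hb])⟩
  have hrep : ((a0 :: u') ++ (b0 :: v')) ++ w
      = List.replicate ((a0 :: u').length + (b0 :: v').length + w.length) c := by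
    rw [List.replicate_add, List.replicate_add]
    rw [← hur, ← hvr, ← hwr]
  have hcount : (a0 :: u').length + (b0 :: v').length + w.length
      ≤ (pWord n).count c := by
    have := h1.sublist.count_le c
    rwa [hrep, List.count_replicate_self] at this
  rw [count_pWord] at hcount
  have hul : 1 ≤ (a0 :: u').length := by simp
  have hvl : 1 ≤ (b0 :: v').length := by simp
  have hwl : 1 ≤ w.length := List.length_pos_iff.2 hw
  have key2 : (c = 0 ∨ c = 1) ∧ (a0 :: u').length = 1 ∧ (b0 :: v').length = 1
      ∧ w.length = 1 := by
    split_ifs at hcount <;> omega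
  have hu'nil : u' = [] := by
    have := key2.2.1; simpa using this
  have hv'nil : v' = [] := by
    have := key2.2.2.1; simpa using this
  subst hu'nil; subst hv'nil
  refine ⟨c, key2.1, ?_, rfl, ?_⟩
  · rw [huc a0 (by simp)]
  · rw [hwr, key2.2.2.2, List.replicate_one]


lemma fwAdd_none_left (W : List ℕ) (t : FlatWord W) : fwAdd W none t = none := by
  unfold fwAdd; exact ite_self _

lemma fwAdd_none_right (W : List ℕ) (s : FlatWord W) : fwAdd W s none = none := by
  unfold fwAdd
  by_cases h : s = none
  · exact (if_pos h).trans h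
  · exact if_neg h

lemma fwAdd_self (W : List ℕ) (s : FlatWord W) : fwAdd W s s = s := if_pos rfl

lemma fwMul_none_left (W : List ℕ) (y : FlatWord W) : fwMul W none y = none := rfl

lemma fwMul_none_right (W : List ℕ) (x : FlatWord W) : fwMul W x none = none := by
  cases x <;> rfl

lemma goal_aux {W : List ℕ} {A B C : FlatWord W} (h : A = none ∨ B = none) :
    fwAdd W A B = fwAdd W (fwAdd W A B) C := by
  have hAB : fwAdd W A B = none := by
    rcases h with h | h
    · rw [h, fwAdd_none_left]
    · rw [h, fwAdd_none_right]
  rw [hAB, fwAdd_none_left]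

end Stmt18

/-- The flat semiring `S(p_n)` satisfies the identity `xyz + yzx ≈ xyz + yzx + xxx`. -/
theorem stmt_18 (n : ℕ) (u v w : FlatWord (pWord n)) :
    fwAdd (pWord n) (fwMul (pWord n) (fwMul (pWord n) u v) w)
        (fwMul (pWord n) (fwMul (pWord n) v w) u) =
      fwAdd (pWord n)
        (fwAdd (pWord n) (fwMul (pWord n) (fwMul (pWord n) u v) w)
          (fwMul (pWord n) (fwMul (pWord n) v w) u))
        (fwMul (pWord n) (fwMul (pWord n) u u) u) := by
  open Stmt18 in
  cases u with
  | none =>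
    exact goal_aux (Or.inl (by rw [fwMul_none_left, fwMul_none_left]))
  | some a =>
  cases v with
  | none =>
    exact goal_aux (Or.inl ((congrArg (fwMul (pWord n) · w) (fwMul_none_right _ _)).trans (fwMul_none_left _ _)))
  | some b =>
  cases w with
  | none =>
    exact goal_aux (Or.inl (by rw [fwMul_none_right]))
  | some c =>
  by_cases h1 : (a.1 ++ b.1) <:+: pWord n
  case neg =>
    refine goal_aux (Or.inl ?_)
    have e1 : fwMul (pWord n) (some a) (some b) = none := dif_neg h1
    rw [e1]; exact fwMul_none_left _ _
  have e1 : fwMul (pWord n) (some a) (some b)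
      = some ⟨a.1 ++ b.1, ⟨by simp [a.2.1], h1⟩⟩ := dif_pos h1
  by_cases h2 : (a.1 ++ b.1) ++ c.1 <:+: pWord n
  case neg =>
    refine goal_aux (Or.inl ?_)
    rw [e1]
    exact dif_neg h2
  by_cases h3 : (b.1 ++ c.1) <:+: pWord n
  case neg =>
    refine goal_aux (Or.inr ?_)
    have e3 : fwMul (pWord n) (some b) (some c) = none := dif_neg h3
    rw [e3]; exact fwMul_none_left _ _
  have e3 : fwMul (pWord n) (some b) (some c)
      = some ⟨b.1 ++ c.1, ⟨by simp [b.2.1], h3⟩⟩ := dif_pos h3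
  by_cases h4 : (b.1 ++ c.1) ++ a.1 <:+: pWord n
  case neg =>
    refine goal_aux (Or.inr ?_)
    rw [e3]
    exact dif_neg h4
  -- main case
  obtain ⟨x, hx01, hax, hbx, hcx⟩ := Stmt18.key a.2.1 b.2.1 c.2.1 h2 h4
  have hxxx : ([x, x, x] : List ℕ) <:+: pWord n := by
    have h2' := h2
    rw [hax, hbx, hcx] at h2'
    simpa using h2'
  have hne : ([x, x, x] : List ℕ) ≠ [] := by simp
  have haa : a.1 ++ a.1 <:+: pWord n := by
    rw [hax]
    exact List.IsInfix.trans ⟨[], [x], rfl⟩ hxxx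
  have h6 : (a.1 ++ a.1) ++ a.1 <:+: pWord n := by
    rw [hax]
    exact hxxx
  have eA : fwMul (pWord n) (fwMul (pWord n) (some a) (some b)) (some c)
      = some ⟨[x, x, x], hne, hxxx⟩ := by
    rw [e1]
    have : fwMul (pWord n) (some (⟨a.1 ++ b.1, ⟨by simp [a.2.1], h1⟩⟩ :
        {u : List ℕ // u ≠ [] ∧ u <:+: pWord n})) (some c)
        = some ⟨(a.1 ++ b.1) ++ c.1, ⟨by simp [a.2.1], h2⟩⟩ := dif_pos h2
    rw [this]
    exact congrArg some (Subtype.ext (by simp [hax, hbx, hcx]))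
  have eB : fwMul (pWord n) (fwMul (pWord n) (some b) (some c)) (some a)
      = some ⟨[x, x, x], hne, hxxx⟩ := by
    rw [e3]
    have : fwMul (pWord n) (some (⟨b.1 ++ c.1, ⟨by simp [b.2.1], h3⟩⟩ :
        {u : List ℕ // u ≠ [] ∧ u <:+: pWord n})) (some a)
        = some ⟨(b.1 ++ c.1) ++ a.1, ⟨by simp [b.2.1], h4⟩⟩ := dif_pos h4
    rw [this]
    exact congrArg some (Subtype.ext (by simp [hax, hbx, hcx]))
  have eC : fwMul (pWord n) (fwMul (pWord n) (some a) (some a)) (some a)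
      = some ⟨[x, x, x], hne, hxxx⟩ := by
    have eaa : fwMul (pWord n) (some a) (some a)
        = some ⟨a.1 ++ a.1, ⟨by simp [a.2.1], haa⟩⟩ := dif_pos haa
    rw [eaa]
    have : fwMul (pWord n) (some (⟨a.1 ++ a.1, ⟨by simp [a.2.1], haa⟩⟩ :
        {u : List ℕ // u ≠ [] ∧ u <:+: pWord n})) (some a)
        = some ⟨(a.1 ++ a.1) ++ a.1, ⟨by simp [a.2.1], h6⟩⟩ := dif_pos h6
    rw [this]
    exact congrArg some (Subtype.ext (by simp [hax]))
  have hS := fwAdd_self (pWord n) (some ⟨[x, x, x], hne, hxxx⟩ : FlatWord (pWord n))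
  rw [eA, eB, eC]
  exact hS.trans (hS.symm.trans (congrArg (fun t => fwAdd (pWord n) t _) hS.symm))
end
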